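/- In a free product H₁ * H₂ of two nontrivial groups, if a ∈ H₁ \ {1} and b ∈ H₂ \ {1}, then the element ab is not a proper power: there is no w ∈ H₁ * H₂ and integer N ≥ 2 with w^N = ab. -/

import Mathlib

open Monoid

set_option linter.unusedSectionVars false

open Monoid Monoid.CoprodI List

namespace CoprodPowAux

variable {G : Bool → Type*} [∀ b, Group (G b)] [∀ b, DecidableEq (G b)]

/-- product of a list of letters -/
def prodList (l : List (Σ b, G b)) : CoprodI G := (l.map fun p => of p.2).prod

/-- l is a reduced word -/
def Ok (l : List (Σ b, G b)) : Prop :=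
  (∀ p ∈ l, p.2 ≠ 1) ∧ l.Chain' (fun p q => p.1 ≠ q.1)

theorem ok_nil : Ok ([] : List (Σ b, G b)) := ⟨by simp, List.isChain_nil⟩

@[simp] theorem prodList_nil : prodList ([] : List (Σ b, G b)) = 1 := rfl

@[simp] theorem prodList_cons (p : Σ b, G b) (l : List (Σ b, G b)) :
    prodList (p :: l) = of p.2 * prodList l := by simp [prodList]

@[simp] theorem prodList_append (l₁ l₂ : List (Σ b, G b)) :
    prodList (l₁ ++ l₂) = prodList l₁ * prodList l₂ := by simp [prodList]

theorem prodList_inj {l₁ l₂ : List (Σ b, G b)} (h₁ : Ok l₁) (h₂ : Ok l₂)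
    (h : prodList l₁ = prodList l₂) : l₁ = l₂ := by
  have hw : Word.equiv.symm (⟨l₁, h₁.1, h₁.2⟩ : Word G)
      = Word.equiv.symm (⟨l₂, h₂.1, h₂.2⟩ : Word G) := h
  have := Word.equiv.symm.injective hw
  exact congrArg Word.toList this

theorem exists_rep (g : CoprodI G) : ∃ l : List (Σ b, G b), Ok l ∧ prodList l = g := by
  refine ⟨(Word.equiv g).toList, ⟨(Word.equiv g).ne_one, (Word.equiv g).chain_ne⟩, ?_⟩
  show Word.equiv.symm (Word.equiv g) = g
  simp

/-- inverse-reverse of a reduced word -/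
def invRev (l : List (Σ b, G b)) : List (Σ b, G b) :=
  l.reverse.map fun p => ⟨p.1, p.2⁻¹⟩

@[simp] theorem length_invRev (l : List (Σ b, G b)) : (invRev l).length = l.length := by
  simp [invRev]

theorem ok_invRev {l : List (Σ b, G b)} (h : Ok l) : Ok (invRev l) := by
  refine ⟨?_, ?_⟩
  · intro p hp
    simp only [invRev, List.mem_map, List.mem_reverse] at hp
    obtain ⟨q, hq, rfl⟩ := hp
    simpa using h.1 q hq
  · rw [invRev, List.Chain', List.isChain_map, List.isChain_reverse]
    exact h.2.imp fun a b hab => Ne.symm hab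

theorem prodList_invRev (l : List (Σ b, G b)) : prodList (invRev l) = (prodList l)⁻¹ := by
  induction l with
  | nil => simp [invRev]
  | cons p l ih =>
      rw [prodList_cons, mul_inv_rev, ← ih]
      simp [invRev]

@[simp] theorem getLast?_invRev (l : List (Σ b, G b)) :
  ((invRev l).head?).map Sigma.fst = (l.getLast?).map Sigma.fst := by
  cases l using List.reverseRecOn with
  | nil => simp [invRev]
  | append_singleton l p => simp [invRev]


/-- alternation: in a chain over Bool, the last index is determined by parity -/
theorem last_idx (l : List (Σ b, G b)) (x : Σ b, G b)
    (h : (x :: l).Chain' (fun p q => p.1 ≠ q.1)) :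
    ((x :: l).getLast (by simp)).1 = if Even l.length then x.1 else !x.1 := by
  induction l generalizing x with
  | nil => simp
  | cons y l ih =>
      have h1 : x.1 ≠ y.1 := (List.isChain_cons_cons.1 h).1
      have h2 := ih y (List.isChain_cons_cons.1 h).2
      have hy : y.1 = !x.1 := by
        revert h1; cases x.1 <;> cases y.1 <;> simp
      rw [List.getLast_cons (by simp), h2, hy]
      rcases Nat.even_or_odd l.length with he | ho
      · have : ¬ Even (l.length + 1) := by simp [Nat.even_add_one, he]
        simp [he, List.length_cons, this, Bool.not_not]
      · have h3 : ¬ Even l.length := Nat.not_even_iff_odd.2 ho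
        have : Even (l.length + 1) := by simpa [Nat.even_add_one] using h3
        simp [h3, List.length_cons, this, Bool.not_not]


theorem pow_rep (l : List (Σ b, G b)) (hOk : Ok l) (hne : l ≠ [])
    (hij : (l.head hne).1 ≠ (l.getLast hne).1) (n : ℕ) :
    Ok ((List.replicate n l).flatten) ∧
      prodList ((List.replicate n l).flatten) = (prodList l) ^ n ∧
      ((List.replicate n l).flatten).length = n * l.length ∧
      (((List.replicate n l).flatten).head? = l.head? ∨ n = 0) := by
  induction n with
  | zero => simp [ok_nil]
  | succ n ih =>
      obtain ⟨ihOk, ihProd, ihLen, ihHead⟩ := ih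
      have hJ : (List.replicate (n+1) l).flatten = l ++ (List.replicate n l).flatten := by
        simp [List.replicate_succ]
      constructor
      · constructor
        · intro p hp
          rw [hJ, List.mem_append] at hp
          exact hp.elim (hOk.1 p) (ihOk.1 p)
        · rw [hJ]
          refine List.isChain_append.2 ⟨hOk.2, ihOk.2, ?_⟩
          intro x hx y hy
          rcases ihHead with hh | rfl
          · rw [hh] at hy
            have hx' : x = l.getLast hne := by
              rwa [List.getLast?_eq_getLast hne, Option.mem_some_iff, eq_comm] at hx
            have hy' : y = l.head hne := by
              rwa [List.head?_eq_head hne, Option.mem_some_iff, eq_comm] at hy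
            rw [hx', hy']
            exact fun h => hij h.symm
          · simp at hy
      refine ⟨?_, ?_, ?_⟩
      · rw [hJ, prodList_append, ihProd, pow_succ']
      · rw [hJ, List.length_append, ihLen]; ring
      · left
        rw [hJ]
        cases l with
        | nil => exact absurd rfl hne
        | cons x t => simp

theorem ok_sandwich {lg' : List (Σ b, G b)} (hOk' : Ok lg') {s t : Bool}
    (cj : ∀ q ∈ lg'.getLast?, q.1 ≠ s) (hst : s ≠ t)
    {u : G s} {v : G t} {w : G s} (hu : u ≠ 1) (hv : v ≠ 1) (hw : w ≠ 1) :
    Ok (lg' ++ ([⟨s,u⟩,⟨t,v⟩,⟨s,w⟩] : List (Σ b, G b)) ++ invRev lg') ∧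
    prodList (lg' ++ ([⟨s,u⟩,⟨t,v⟩,⟨s,w⟩] : List (Σ b, G b)) ++ invRev lg')
      = prodList lg' * (of u * of v * of w) * (prodList lg')⁻¹ ∧
    (lg' ++ ([⟨s,u⟩,⟨t,v⟩,⟨s,w⟩] : List (Σ b, G b)) ++ invRev lg').length
      = 2 * lg'.length + 3 := by
  have hB : ([⟨s,u⟩,⟨t,v⟩,⟨s,w⟩] : List (Σ b, G b)).Chain' (fun p q => p.1 ≠ q.1) := by
    simp [List.Chain', List.isChain_cons_cons, hst, Ne.symm hst]
  have hne1 : ∀ p ∈ lg' ++ ([⟨s,u⟩,⟨t,v⟩,⟨s,w⟩] : List (Σ b, G b)) ++ invRev lg',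
      p.2 ≠ 1 := by
    intro p hp
    simp only [List.mem_append] at hp
    rcases hp with (hp | hp) | hp
    · exact hOk'.1 p hp
    · simp only [List.mem_cons] at hp
      rcases hp with rfl | rfl | rfl | hp
      · simpa
      · simpa
      · simpa
      · simp at hp
    · exact (ok_invRev hOk').1 p hp
  have hch : (lg' ++ ([⟨s,u⟩,⟨t,v⟩,⟨s,w⟩] : List (Σ b, G b)) ++ invRev lg').Chain'
      (fun p q => p.1 ≠ q.1) := by
    refine List.isChain_append.2 ⟨List.isChain_append.2 ⟨hOk'.2, hB, ?_⟩,
      (ok_invRev hOk').2, ?_⟩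
    · intro q hq r hr
      simp only [List.head?_cons, Option.mem_some_iff] at hr
      subst hr
      exact cj q hq
    · intro q hq r hr
      have hq' : q = ⟨s, w⟩ := by
        rw [List.getLast?_append] at hq
        exact (by simpa using hq : (⟨s, w⟩ : Σ b, G b) = q).symm
      subst hq'
      have hr' : some r.1 = (lg'.getLast?).map Sigma.fst := by
        rw [← getLast?_invRev]
        rw [Option.mem_def] at hr
        simp [hr]
      rcases ho : lg'.getLast? with _ | q'
      · rw [ho] at hr'; simp at hr'
      · rw [ho] at hr'
        simp only [Option.map_some] at hr'
        have hcj := cj q' (by simp [ho, Option.mem_def])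
        intro hc
        exact hcj ((Option.some_inj.mp hr').symm.trans hc.symm)
  refine ⟨⟨hne1, hch⟩, ?_, ?_⟩
  · rw [prodList_append, prodList_append, prodList_invRev]
    rw [prodList_cons, prodList_cons, prodList_cons, prodList_nil]
    group
  · simp [length_invRev]; ring

theorem conj_core : ∀ (n : ℕ) (lg : List (Σ b, G b)), Ok lg → lg.length = n →
    ∀ (i j : Bool) (x : G i) (y : G j), i ≠ j → x ≠ 1 → y ≠ 1 →
    ∃ le : List (Σ b, G b), Ok le ∧
      prodList le = prodList lg * (of x * of y) * (prodList lg)⁻¹ ∧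
      (le.length = 2 ∨ (Odd le.length ∧ 3 ≤ le.length)) := by
  intro n
  induction n using Nat.strong_induction_on with
  | _ n ih =>
    intro lg hOk hlen i j x y hij hx hy
    cases lg using List.reverseRecOn with
    | nil =>
        refine ⟨([⟨i,x⟩,⟨j,y⟩] : List (Σ b, G b)), ⟨?_, ?_⟩, ?_, Or.inl rfl⟩
        · intro p hp
          simp only [List.mem_cons] at hp
          rcases hp with rfl | rfl | hp
          · simpa
          · simpa
          · simp at hp
        · simp [List.Chain', List.isChain_cons_cons, hij]
        · simp [prodList_cons, prodList_nil, prodList_append]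
    | append_singleton lg' p =>
        obtain ⟨m, z⟩ := p
        have hOk' : Ok lg' := by
          refine ⟨fun q hq => hOk.1 q (by simp [hq]), (List.isChain_append.1 hOk.2).1⟩
        have hz : z ≠ 1 := hOk.1 ⟨m, z⟩ (by simp)
        have cj : ∀ q ∈ lg'.getLast?, q.1 ≠ m := by
          intro q hq
          exact (List.isChain_append.1 hOk.2).2.2 q hq ⟨m, z⟩ (by simp)
        have hlen' : lg'.length < n := by
          rw [← hlen]; simp
        have hglg : prodList (lg' ++ [(⟨m, z⟩ : Σ b, G b)])
            = prodList lg' * of z := by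
          simp [prodList_append, prodList_cons, prodList_nil]
        have hm : m = i ∨ m = j := by
          revert hij; cases i <;> cases j <;> cases m <;> simp
        rcases hm with rfl | rfl
        · -- last letter in same factor as x
          by_cases hzx : z * x = 1
          · have hofzx : of z * of x = 1 := by
              rw [← MonoidHom.map_mul, hzx, MonoidHom.map_one]
            obtain ⟨le, hOke, hpe, hlene⟩ :=
              ih lg'.length hlen' lg' hOk' rfl j m y z⁻¹ hij.symm hy (inv_ne_one.2 hz)
            refine ⟨le, hOke, ?_, hlene⟩
            rw [hpe, hglg]
            have hxz : of x = (of z)⁻¹ := eq_inv_of_mul_eq_one_right ?_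
            · rw [MonoidHom.map_inv, hxz]
              group
            · exact hofzx
          · obtain ⟨hOke, hpe, hlene⟩ := ok_sandwich hOk' cj hij hzx hy (inv_ne_one.2 hz)
            refine ⟨_, hOke, ?_, Or.inr ?_⟩
            · rw [hpe, hglg, MonoidHom.map_mul, MonoidHom.map_inv]
              group
            · constructor
              · exact ⟨lg'.length + 1, by rw [hlene]; ring⟩
              · omega
        · -- last letter in same factor as y
          by_cases hyz : y * z⁻¹ = 1
          · have hyz' : of y = of z := by
              have : y = z := by
                have := mul_inv_eq_one.1 hyz
                exact this
              rw [this]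
            obtain ⟨le, hOke, hpe, hlene⟩ :=
              ih lg'.length hlen' lg' hOk' rfl m i z x hij.symm hz hx
            refine ⟨le, hOke, ?_, hlene⟩
            rw [hpe, hglg, ← hyz']
            group
          · obtain ⟨hOke, hpe, hlene⟩ := ok_sandwich hOk' cj (Ne.symm hij) hz hx hyz
            refine ⟨_, hOke, ?_, Or.inr ?_⟩
            · rw [hpe, hglg, MonoidHom.map_mul, MonoidHom.map_inv]
              group
            · constructor
              · exact ⟨lg'.length + 1, by rw [hlene]; ring⟩
              · omega


theorem main_aux {i j : Bool} (hij : i ≠ j) {x : G i} {y : G j} (hx : x ≠ 1) (hy : y ≠ 1)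
    {n : ℕ} (hn : 2 ≤ n) :
    ∀ (Nl : ℕ) (lw : List (Σ b, G b)), Ok lw → lw.length = Nl →
    ∀ g : CoprodI G, (prodList lw) ^ n ≠ g * (of x * of y) * g⁻¹ := by
  intro Nl
  induction Nl using Nat.strong_induction_on with
  | _ Nl ih =>
  intro lw hOk hlen g hpow
  obtain ⟨lg, hOkg, rfl⟩ := exists_rep g
  obtain ⟨le, hOke, hpe, hlene⟩ := conj_core lg.length lg hOkg rfl i j x y hij hx hy
  have hkey : (prodList lw) ^ n = prodList le := by rw [hpow, hpe]
  cases lw with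
  | nil =>
      have h0 : prodList ([] : List (Σ b, G b)) = prodList le := by
        rw [← hkey]; simp [prodList_nil]
      have := prodList_inj ok_nil hOke h0
      rw [← this] at hlene
      rcases hlene with h | ⟨-, h⟩ <;> simp at h
  | cons p rest =>
  by_cases hrest : rest = []
  · subst hrest
    have hsing : prodList [p] = of p.2 := by simp [prodList_cons, prodList_nil]
    by_cases h1 : p.2 ^ n = 1
    · have h0 : prodList ([] : List (Σ b, G b)) = prodList le := by
        rw [← hkey, hsing, ← MonoidHom.map_pow, h1, MonoidHom.map_one, prodList_nil]
      have := prodList_inj ok_nil hOke h0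
      rw [← this] at hlene
      rcases hlene with h | ⟨-, h⟩ <;> simp at h
    · have h0 : prodList [(⟨p.1, p.2 ^ n⟩ : Σ b, G b)] = prodList le := by
        rw [← hkey, hsing, ← MonoidHom.map_pow]
        simp [prodList_cons, prodList_nil]
      have hOks : Ok [(⟨p.1, p.2 ^ n⟩ : Σ b, G b)] := by
        refine ⟨?_, List.isChain_singleton _⟩
        intro q hq
        simp only [List.mem_cons] at hq
        rcases hq with rfl | hq
        · simpa
        · simp at hq
      have := prodList_inj hOks hOke h0
      rw [← this] at hlene
      rcases hlene with h | ⟨-, h⟩ <;> simp at h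
  · have hne : (p :: rest) ≠ [] := List.cons_ne_nil _ _
    by_cases hidx : p.1 = ((p :: rest).getLast hne).1
    · -- not cyclically reduced : peel off the last letter
      obtain ⟨qi, xp⟩ := p
      have hlast : (⟨qi, xp⟩ :: rest).getLast hne = rest.getLast hrest :=
        List.getLast_cons hrest
      rcases hq : rest.getLast hrest with ⟨qi2, z⟩
      rw [hlast, hq] at hidx
      have hq2 : qi = qi2 := hidx
      subst hq2
      have hsplit : rest = rest.dropLast ++ [(⟨qi, z⟩ : Σ b, G b)] := by
        rw [← hq]
        exact (List.dropLast_append_getLast hrest).symm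
      set mid := rest.dropLast with hmiddef
      have hmemmid : ∀ q ∈ mid, q ∈ (⟨qi, xp⟩ : Σ b, G b) :: rest := by
        intro q hqm
        exact List.mem_cons_of_mem _ (by rw [hsplit]; exact List.mem_append_left _ hqm)
      have hchainrest : rest.Chain' (fun p q => p.1 ≠ q.1) := hOk.2.tail
      have hchainsplit := hchainrest
      rw [hsplit] at hchainsplit
      have hOkmid : Ok mid :=
        ⟨fun q hqm => hOk.1 q (hmemmid q hqm), (List.isChain_append.1 hchainsplit).1⟩
      have hmidjunc : ∀ u ∈ mid.getLast?, u.1 ≠ qi := by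
        intro u hu
        exact (List.isChain_append.1 hchainsplit).2.2 u hu ⟨qi, z⟩ (by simp)
      have hxp : xp ≠ 1 := hOk.1 _ List.mem_cons_self
      have hz : z ≠ 1 := by
        refine hOk.1 ⟨qi, z⟩ (List.mem_cons_of_mem _ ?_)
        rw [← hq]
        exact List.getLast_mem hrest
      have hmidhead : ∀ u ∈ mid.head?, qi ≠ u.1 := by
        intro u hu
        have h2 := (List.isChain_cons.1 hOk.2).1
        refine h2 u ?_
        rw [hsplit]
        cases hm : mid with
        | nil => rw [hm] at hu; simp at hu
        | cons c t =>
            rw [hm] at hu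
            simp only [List.head?_cons, Option.mem_some_iff] at hu
            subst hu
            simp [hm]
      have hw : prodList ((⟨qi, xp⟩ : Σ b, G b) :: rest)
          = of xp * (prodList mid * of z) := by
        conv_lhs => rw [hsplit]
        simp [prodList_cons, prodList_append, prodList_nil]
      have hlenrest : rest.length = mid.length + 1 := by
        conv_lhs => rw [hsplit]
        simp
      have hpow2 : (of z * prodList ((⟨qi, xp⟩ : Σ b, G b) :: rest) * (of z)⁻¹) ^ n
          = (of z * prodList lg) * (of x * of y) * (of z * prodList lg)⁻¹ := by
        rw [conj_pow, hpow]
        group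
      have hw2 : of z * prodList ((⟨qi, xp⟩ : Σ b, G b) :: rest) * (of z)⁻¹
          = of (z * xp) * prodList mid := by
        rw [hw, MonoidHom.map_mul]
        group
      by_cases hzx : z * xp = 1
      · rw [hw2, hzx, MonoidHom.map_one, one_mul] at hpow2
        simp only [List.length_cons] at hlen
        exact ih mid.length (by omega) mid hOkmid rfl _ hpow2
      · rw [hw2, ← prodList_cons ⟨qi, z * xp⟩ mid] at hpow2
        have hOk2 : Ok ((⟨qi, z * xp⟩ : Σ b, G b) :: mid) := by
          refine ⟨?_, List.isChain_cons.2 ⟨fun u hu => hmidhead u hu, hOkmid.2⟩⟩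
          intro q hqm
          simp only [List.mem_cons] at hqm
          rcases hqm with rfl | hqm
          · simpa
          · exact hOkmid.1 q hqm
        simp only [List.length_cons] at hlen
        exact ih (mid.length + 1) (by omega) _ hOk2 (by simp) _ hpow2
    · -- cyclically reduced case
      obtain ⟨hOkJ, hprodJ, hlenJ, -⟩ := pow_rep (p :: rest) hOk hne hidx n
      have hJ := prodList_inj hOkJ hOke (by rw [hprodJ, hkey])
      rw [hJ] at hlenJ
      rcases hlene with h2 | ⟨hodd, h3⟩
      · rw [h2] at hlenJ
        have h4 : 2 * 2 ≤ n * (p :: rest).length := by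
          refine Nat.mul_le_mul hn ?_
          simp only [List.length_cons]
          have : rest.length ≠ 0 := fun h => hrest (List.length_eq_zero_iff.1 h)
          omega
        omega
      · rw [hlenJ] at hodd
        have hoddlen : Odd (p :: rest).length := (Nat.odd_mul.mp hodd).2
        have heven : Even rest.length := by
          rcases hoddlen with ⟨k, hk⟩
          simp only [List.length_cons] at hk
          exact ⟨k, by omega⟩
        have := last_idx rest p hOk.2
        rw [if_pos heven] at this
        exact hidx this.symm

end CoprodPowAux

/-- In a free product `H₁ * H₂`, the product `ab` of nontrivial elements `a ∈ H₁`,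
`b ∈ H₂` is not a proper power. -/
theorem coprod_mixed_product_not_proper_power {M N : Type*} [Group M] [Group N]
    (a : M) (b : N) (ha : a ≠ 1) (hb : b ≠ 1) :
    ¬ ∃ (w : Coprod M N) (k : ℤ), 2 ≤ k ∧
        w ^ k = Coprod.inl a * Coprod.inr b := by
  rintro ⟨w, k, hk, hpow⟩
  have hkn : ((k.toNat : ℤ)) = k := Int.toNat_of_nonneg (by omega)
  have hn2 : 2 ≤ k.toNat := by omega
  letI G : Bool → Type _ := fun c => cond c (ULift.{max u_1 u_2} N) (ULift.{max u_1 u_2} M)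
  letI instG : ∀ c : Bool, Group (G c) := fun c =>
    c.rec (inferInstance : Group (ULift M)) (inferInstance : Group (ULift N))
  letI instD : ∀ c : Bool, DecidableEq (G c) := fun c => Classical.decEq _
  let eM : M ≃* G false := MulEquiv.ulift.symm
  let eN : N ≃* G true := MulEquiv.ulift.symm
  let fM : M →* CoprodI G := (CoprodI.of (i := false)).comp eM.toMonoidHom
  let fN : N →* CoprodI G := (CoprodI.of (i := true)).comp eN.toMonoidHom
  let φ : Coprod M N →* CoprodI G := Coprod.lift fM fN
  have ha' : eM a ≠ 1 := fun h => ha (by simpa using congrArg eM.symm h)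
  have hb' : eN b ≠ 1 := fun h => hb (by simpa using congrArg eN.symm h)
  have hφ : (φ w) ^ k = CoprodI.of (eM a) * CoprodI.of (eN b) := by
    rw [← map_zpow, hpow, map_mul]
    rw [Coprod.lift_apply_inl, Coprod.lift_apply_inr]
    rfl
  have hφn : (φ w) ^ k.toNat = CoprodI.of (eM a) * CoprodI.of (eN b) := by
    rw [← zpow_natCast, hkn, hφ]
  obtain ⟨lw, hOkw, hlw⟩ := CoprodPowAux.exists_rep (G := G) (φ w)
  refine CoprodPowAux.main_aux (i := false) (j := true) Bool.false_ne_true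
    (x := eM a) (y := eN b) ha' hb' hn2 lw.length lw hOkw rfl 1 ?_
  rw [hlw, hφn]
  simp
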